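/- Let (D, D_i) be a complete filtered ring whose associated graded ring gr D is left and right noetherian, and let (M, M_i) be a good filtered (D, D_i)-module. Then there exists a resolution L_• → M of M by free D-modules of finite type, together with filtrations (L_{n,i}) making each (L_n, L_{n,i}) a free filtered (D, D_i)-module of finite type, such that all the morphisms L_{n+1} → L_n and L_0 → M are strict filtered morphisms. Moreover, the associated graded complex gr L_• is then a resolution of gr M by free gr D-modules of finite type. -/

import Mathlib

universe u v

/-- The `i`-th filtration step of a filt free filtered `(D, Dᵢ)`-module of finite type,
a finite direct sum of twists `D(n k)` (where `D(n)ᵢ = D_{i+n}`). -/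
def freeFilt {D : Type u} [Ring D] (FD : ℤ → AddSubgroup D) {s : ℕ} (n : Fin s → ℤ)
    (i : ℤ) : AddSubgroup (Fin s → D) where
  carrier := {x | ∀ k, x k ∈ FD (i + n k)}
  zero_mem' := fun _ => (FD _).zero_mem
  add_mem' := fun hx hy k => (FD _).add_mem (hx k) (hy k)
  neg_mem' := fun hx k => (FD _).neg_mem (hx k)

/-- A filtration `(Mᵢ)` of a `D`-module `M` is good if it is the image filtration under a
strict surjective filtered morphism from a free filtered `(D, Dᵢ)`-module of finite type. -/
def IsGoodFiltration {D : Type u} [Ring D] (FD : ℤ → AddSubgroup D)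
    {M : Type v} [AddCommGroup M] [Module D M] (FM : ℤ → AddSubgroup M) : Prop :=
  ∃ (s : ℕ) (n : Fin s → ℤ) (φ : (Fin s → D) →ₗ[D] M),
    Function.Surjective φ ∧ ∀ i : ℤ, FM i = (freeFilt FD n i).map φ.toAddMonoidHom

/-- Auxiliary packaging: a strict filtered epimorphism from a free filtered module of
finite type onto a filtered module `(P, FP)`. -/
structure GoodPack (D : Type u) [Ring D] (FD : ℤ → AddSubgroup D) : Type (u + 1) where
  s : ℕ
  n : Fin s → ℤ
  P : Type u
  [grp : AddCommGroup P]
  [mod : Module D P]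
  FP : ℤ → AddSubgroup P
  ψ : (Fin s → D) →ₗ[D] P
  surj : Function.Surjective ψ
  strict : ∀ i : ℤ, FP i = (freeFilt FD n i).map ψ.toAddMonoidHom

attribute [instance] GoodPack.grp GoodPack.mod

/-- One step of the resolution: a strict epimorphism from a free filtered module of finite
type onto the kernel of the previous one, with its induced filtration. -/
noncomputable def pkStep {D : Type u} [Ring D] (FD : ℤ → AddSubgroup D)
    (hkergood : ∀ (s : ℕ) (n : Fin s → ℤ) (P : Type u) [AddCommGroup P] [Module D P]
      (FP : ℤ → AddSubgroup P) (ψ : (Fin s → D) →ₗ[D] P),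
      Function.Surjective ψ → (∀ i : ℤ, FP i = (freeFilt FD n i).map ψ.toAddMonoidHom) →
      IsGoodFiltration FD (fun i =>
        (freeFilt FD n i).comap (LinearMap.ker ψ).subtype.toAddMonoidHom))
    (p : GoodPack D FD) : GoodPack D FD :=
  let h := hkergood p.s p.n p.P p.FP p.ψ p.surj p.strict
  { s := h.choose
    n := h.choose_spec.choose
    P := ↥(LinearMap.ker p.ψ)
    FP := fun i => (freeFilt FD p.n i).comap (LinearMap.ker p.ψ).subtype.toAddMonoidHom
    ψ := h.choose_spec.choose_spec.choose
    surj := h.choose_spec.choose_spec.choose_spec.1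
    strict := h.choose_spec.choose_spec.choose_spec.2 }

/-- The sequence of strict epimorphisms forming the good resolution. -/
noncomputable def pks {D : Type u} [Ring D] (FD : ℤ → AddSubgroup D)
    (hkergood : ∀ (s : ℕ) (n : Fin s → ℤ) (P : Type u) [AddCommGroup P] [Module D P]
      (FP : ℤ → AddSubgroup P) (ψ : (Fin s → D) →ₗ[D] P),
      Function.Surjective ψ → (∀ i : ℤ, FP i = (freeFilt FD n i).map ψ.toAddMonoidHom) →
      IsGoodFiltration FD (fun i =>
        (freeFilt FD n i).comap (LinearMap.ker ψ).subtype.toAddMonoidHom))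
    {M : Type u} [AddCommGroup M] [Module D M] (FM : ℤ → AddSubgroup M)
    (s0 : ℕ) (n0 : Fin s0 → ℤ) (ψ0 : (Fin s0 → D) →ₗ[D] M)
    (hsurj : Function.Surjective ψ0)
    (hstrict : ∀ i : ℤ, FM i = (freeFilt FD n0 i).map ψ0.toAddMonoidHom) :
    ℕ → GoodPack D FD :=
  fun m => Nat.rec
    ({ s := s0, n := n0, P := M, FP := FM, ψ := ψ0, surj := hsurj, strict := hstrict } :
      GoodPack D FD)
    (fun _ p => pkStep FD hkergood p) m

/-- Over a complete filtered ring `(D, Dᵢ)` whose associated graded ring is noetherian (here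
expressed, as in Laumon A.1.1.2, by the property that kernels of strict filtered epimorphisms
from free filtered modules of finite type are again good), every good filtered `(D, Dᵢ)`-module
`(M, Mᵢ)` admits a good resolution: a resolution `L_• → M` by free filtered modules of finite
type with strict morphisms; moreover `gr L_•` is then a resolution of `gr M` by free
`gr D`-modules of finite type. -/
theorem stmt_16 {D : Type u} [Ring D] {M : Type u} [AddCommGroup M] [Module D M]
    (FD : ℤ → AddSubgroup D) (hFDmono : Monotone FD)
    (hFDone : (1 : D) ∈ FD 0)
    (hFDmul : ∀ i j : ℤ, ∀ a ∈ FD i, ∀ b ∈ FD j, a * b ∈ FD (i + j))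
    (hFDexh : ∀ a : D, ∃ i, a ∈ FD i)
    (hFDcomp : ∀ i : ℤ, ∀ y : ℕ → D, (∀ n, y n ∈ FD i) →
      (∀ n : ℕ, y (n + 1) - y n ∈ FD (i - (n : ℤ))) →
      ∃ z ∈ FD i, ∀ n : ℕ, z - y n ∈ FD (i - (n : ℤ)))
    (hFDsep : ∀ i : ℤ, ∀ a ∈ FD i, (∀ n : ℕ, a ∈ FD (i - (n : ℤ))) → a = 0)
    -- the noetherianity of `gr D`, via its consequence [Lau85, A.1.1.2]: the kernel of a
    -- strict filtered epimorphism from a free filtered module of finite type, with the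
    -- induced filtration, is again a good filtered module
    (hkergood : ∀ (s : ℕ) (n : Fin s → ℤ) (P : Type u) [AddCommGroup P] [Module D P]
      (FP : ℤ → AddSubgroup P) (ψ : (Fin s → D) →ₗ[D] P),
      Function.Surjective ψ → (∀ i : ℤ, FP i = (freeFilt FD n i).map ψ.toAddMonoidHom) →
      IsGoodFiltration FD (fun i =>
        (freeFilt FD n i).comap (LinearMap.ker ψ).subtype.toAddMonoidHom))
    (FM : ℤ → AddSubgroup M) (hFMmono : Monotone FM)
    (hFMsmul : ∀ i j : ℤ, ∀ a ∈ FD i, ∀ x ∈ FM j, a • x ∈ FM (i + j))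
    (hMgood : IsGoodFiltration FD FM) :
    ∃ (s : ℕ → ℕ) (n : ∀ m : ℕ, Fin (s m) → ℤ)
      (φ : ∀ m : ℕ, (Fin (s (m + 1)) → D) →ₗ[D] (Fin (s m) → D))
      (φ0 : (Fin (s 0) → D) →ₗ[D] M),
      -- `L_• → M` is a resolution of `M`
      Function.Surjective φ0 ∧
      (∀ x, φ0 (φ 0 x) = 0) ∧
      (∀ x, φ0 x = 0 → ∃ y, φ 0 y = x) ∧
      (∀ m x, φ m (φ (m + 1) x) = 0) ∧
      (∀ m x, φ m x = 0 → ∃ y, φ (m + 1) y = x) ∧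
      -- `L_0 → M` is strict (a strict epimorphism onto `(M, Mᵢ)`)
      (∀ i : ℤ, FM i = (freeFilt FD (n 0) i).map φ0.toAddMonoidHom) ∧
      -- the `L_{m+1} → L_m` are strict filtered morphisms
      (∀ (m : ℕ) (i : ℤ), ∀ x ∈ freeFilt FD (n (m + 1)) i, φ m x ∈ freeFilt FD (n m) i) ∧
      (∀ (m : ℕ) (i : ℤ) (x : Fin (s (m + 1)) → D), φ m x ∈ freeFilt FD (n m) i →
        ∃ y ∈ freeFilt FD (n (m + 1)) i, φ m y = φ m x) ∧
      -- moreover `gr L_•` is a resolution of `gr M` (by free `gr D`-modules of finite type)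
      (∀ i : ℤ, ∀ x ∈ FM i, ∃ l ∈ freeFilt FD (n 0) i, x - φ0 l ∈ FM (i - 1)) ∧
      (∀ i : ℤ, ∀ l ∈ freeFilt FD (n 0) i, φ0 l ∈ FM (i - 1) →
        ∃ y ∈ freeFilt FD (n 1) i, l - φ 0 y ∈ freeFilt FD (n 0) (i - 1)) ∧
      (∀ (m : ℕ) (i : ℤ), ∀ l ∈ freeFilt FD (n (m + 1)) i,
        φ m l ∈ freeFilt FD (n m) (i - 1) →
        ∃ y ∈ freeFilt FD (n (m + 2)) i, l - φ (m + 1) y ∈ freeFilt FD (n (m + 1)) (i - 1)) := by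
  classical
  -- an element of `freeFilt` at level `i - 1` is also at level `i`
  have hmono : ∀ {t : ℕ} (nn : Fin t → ℤ) (i : ℤ) (x : Fin t → D),
      x ∈ freeFilt FD nn (i - 1) → x ∈ freeFilt FD nn i := by
    intro t nn i x hx k
    exact hFDmono (by omega) (hx k)
  obtain ⟨s0, n0, ψ0, hψ0surj, hψ0strict⟩ := hMgood
  -- the sequence of strict epimorphisms
  set Q : ℕ → GoodPack D FD := pks FD hkergood FM s0 n0 ψ0 hψ0surj hψ0strict with hQ
  -- the boundary maps
  let φ : ∀ m : ℕ, (Fin (Q (m + 1)).s → D) →ₗ[D] (Fin (Q m).s → D) :=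
    fun m => (LinearMap.ker (Q m).ψ).subtype.comp
      ((Q (m + 1)).ψ :
        (Fin (Q (m + 1)).s → D) →ₗ[D] ↥(LinearMap.ker (Q m).ψ))
  -- the map `φ m` lands in the kernel of `(Q m).ψ`
  have hland : ∀ (m : ℕ) (x : Fin (Q (m + 1)).s → D),
      φ m x ∈ LinearMap.ker (Q m).ψ := fun m x => ((Q (m + 1)).ψ x).2
  -- strictness of `(Q (m+1)).ψ` expressed with the induced filtration
  have hstrictK : ∀ (m : ℕ) (i : ℤ),
      (freeFilt FD (Q m).n i).comap (LinearMap.ker (Q m).ψ).subtype.toAddMonoidHom =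
        (freeFilt FD (Q (m + 1)).n i).map (Q (m + 1)).ψ.toAddMonoidHom :=
    fun m i => (Q (m + 1)).strict i
  -- `ψ0`, retyped with the degree-`0` pack's fields
  let ψ0' : (Fin (Q 0).s → D) →ₗ[D] M := ψ0
  have hsurj' : Function.Surjective ψ0' := hψ0surj
  have hstrict' : ∀ i : ℤ, FM i = (freeFilt FD (Q 0).n i).map ψ0'.toAddMonoidHom :=
    hψ0strict
  refine ⟨fun m => (Q m).s, fun m => (Q m).n, φ, ψ0',
    hsurj', ?_, ?_, ?_, ?_, hstrict', ?_, ?_, ?_, ?_, ?_⟩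
  · -- `φ0 ∘ φ 0 = 0`
    intro x
    exact hland 0 x
  · -- exactness at `L_0`
    intro x hx
    obtain ⟨y, hy⟩ := (Q 1).surj ⟨x, hx⟩
    exact ⟨y, congrArg Subtype.val hy⟩
  · -- `φ m ∘ φ (m+1) = 0`
    intro m x
    have h : (Q (m + 1)).ψ (φ (m + 1) x) = 0 := hland (m + 1) x
    show (LinearMap.ker (Q m).ψ).subtype ((Q (m + 1)).ψ (φ (m + 1) x)) = 0
    rw [h]
    exact map_zero (LinearMap.ker (Q m).ψ).subtype
  · -- exactness at `L_{m+1}`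
    intro m x hx
    have hx' : (Q (m + 1)).ψ x = 0 := Subtype.ext hx
    obtain ⟨y, hy⟩ := (Q (m + 2)).surj ⟨x, hx'⟩
    exact ⟨y, congrArg Subtype.val hy⟩
  · -- `φ m` is a filtered morphism
    intro m i x hx
    have h1 : (Q (m + 1)).ψ x ∈
        (freeFilt FD (Q (m + 1)).n i).map (Q (m + 1)).ψ.toAddMonoidHom :=
      ⟨x, hx, rfl⟩
    rw [← hstrictK m i] at h1
    exact h1
  · -- `φ m` is strict
    intro m i x hx
    have hmem : (⟨φ m x, hland m x⟩ : LinearMap.ker (Q m).ψ) ∈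
        (freeFilt FD (Q m).n i).comap (LinearMap.ker (Q m).ψ).subtype.toAddMonoidHom :=
      hx
    rw [hstrictK m i] at hmem
    obtain ⟨y, hy, hyx⟩ := hmem
    exact ⟨y, hy, congrArg Subtype.val hyx⟩
  · -- `gr L_0 → gr M` surjective
    intro i x hx
    rw [hstrict' i] at hx
    obtain ⟨l, hl, hlx⟩ := hx
    refine ⟨l, hl, ?_⟩
    have hlx' : ψ0' l = x := hlx
    rw [hlx', sub_self]
    exact (FM (i - 1)).zero_mem
  · -- exactness of `gr` at degree 0
    intro i l hl hφl
    rw [hstrict' (i - 1)] at hφl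
    obtain ⟨l', hl', hl'l⟩ := hφl
    have hl'l' : ψ0' l' = ψ0' l := hl'l
    have hker : l - l' ∈ LinearMap.ker (Q 0).ψ := by
      show ψ0' (l - l') = 0
      rw [map_sub, hl'l', sub_self]
    have hmem : (⟨l - l', hker⟩ : LinearMap.ker (Q 0).ψ) ∈
        (freeFilt FD (Q 0).n i).comap (LinearMap.ker (Q 0).ψ).subtype.toAddMonoidHom :=
      (freeFilt FD (Q 0).n i).sub_mem hl (hmono _ i l' hl')
    rw [hstrictK 0 i] at hmem
    obtain ⟨y, hy, hyx⟩ := hmem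
    refine ⟨y, hy, ?_⟩
    have hv : φ 0 y = l - l' := congrArg Subtype.val hyx
    rw [hv]
    simpa using hl'
  · -- exactness of `gr` in higher degrees
    intro m i l hl hφl
    have hmem1 : (⟨φ m l, hland m l⟩ : LinearMap.ker (Q m).ψ) ∈
        (freeFilt FD (Q m).n (i - 1)).comap
          (LinearMap.ker (Q m).ψ).subtype.toAddMonoidHom := hφl
    rw [hstrictK m (i - 1)] at hmem1
    obtain ⟨l', hl', hl'l⟩ := hmem1
    have hl'l' : (Q (m + 1)).ψ l' = (Q (m + 1)).ψ l := hl'l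
    have hker : l - l' ∈ LinearMap.ker (Q (m + 1)).ψ := by
      simp only [LinearMap.mem_ker, map_sub]
      rw [hl'l', sub_self]
    have hmem : (⟨l - l', hker⟩ : LinearMap.ker (Q (m + 1)).ψ) ∈
        (freeFilt FD (Q (m + 1)).n i).comap
          (LinearMap.ker (Q (m + 1)).ψ).subtype.toAddMonoidHom :=
      (freeFilt FD (Q (m + 1)).n i).sub_mem hl (hmono _ i l' hl')
    rw [hstrictK (m + 1) i] at hmem
    obtain ⟨y, hy, hyx⟩ := hmem
    refine ⟨y, hy, ?_⟩
    have hv : φ (m + 1) y = l - l' := congrArg Subtype.val hyx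
    rw [hv]
    simpa using hl'
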